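/- Let f_1, …, f_m : ℝ^p → ℝ each be L-smooth. For any x, τ, x* ∈ ℝ^p, (1/m)∑_{j=1}^m ‖ ∇f_j(x) − ∇f_j(τ) − (1/m)∑_{l=1}^m (∇f_l(x) − ∇f_l(τ)) ‖² ≤ 2L²‖x − x*‖² + 2L²‖τ − x*‖². (Equivalently: the variance, over a uniformly random index s ∈ {1,…,m}, of the SVRG gradient estimator ∇f_s(x) − ∇f_s(τ) + (1/m)∑_j ∇f_j(τ) around (1/m)∑_j ∇f_j(x) is bounded by 2L²‖x − x*‖² + 2L²‖τ − x*‖².) -/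

import Mathlib

lemma var_le_meansq {E : Type*} [NormedAddCommGroup E] [InnerProductSpace ℝ E]
    {m : ℕ} (hm : 0 < m) (g : Fin m → E) :
    ∑ j, ‖g j - (m : ℝ)⁻¹ • ∑ l, g l‖ ^ 2 ≤ ∑ j, ‖g j‖ ^ 2 := by
  set a : E := (m : ℝ)⁻¹ • ∑ l, g l with ha
  have hmne : (m : ℝ) ≠ 0 := by positivity
  have hsum : ∑ l, g l = (m : ℝ) • a := by
    rw [ha, smul_smul, mul_inv_cancel₀ hmne, one_smul]
  have key : ∑ j, ‖g j - a‖ ^ 2 = (∑ j, ‖g j‖ ^ 2) - (m : ℝ) * ‖a‖ ^ 2 := by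
    have expand : ∀ j, ‖g j - a‖ ^ 2
        = ‖g j‖ ^ 2 - 2 * inner ℝ (g j) a + ‖a‖ ^ 2 := fun j => by
      rw [norm_sub_sq_real]
    simp_rw [expand]
    have hin : ∑ j, (2:ℝ) * inner ℝ (g j) a = 2 * ((m : ℝ) * ‖a‖ ^ 2) := by
      rw [← Finset.mul_sum, ← sum_inner, hsum, real_inner_smul_left,
        real_inner_self_eq_norm_sq]
    rw [Finset.sum_add_distrib, Finset.sum_sub_distrib, hin, Finset.sum_const]
    simp only [Finset.card_univ, Fintype.card_fin, nsmul_eq_mul]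
    ring
  have hmpos : (0 : ℝ) < m := by exact_mod_cast hm
  nlinarith [sq_nonneg ‖a‖, hmpos]

theorem svrg_variance_bound {p m : ℕ} (hm : 0 < m)
    (f : Fin m → EuclideanSpace ℝ (Fin p) → ℝ) (L : ℝ)
    (hdiff : ∀ j, Differentiable ℝ (f j))
    (hsmooth : ∀ j, ∀ x y : EuclideanSpace ℝ (Fin p),
      ‖gradient (f j) x - gradient (f j) y‖ ≤ L * ‖x - y‖)
    (x τ xstar : EuclideanSpace ℝ (Fin p)) :
    (m : ℝ)⁻¹ * ∑ j, ‖gradient (f j) x - gradient (f j) τ -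
          (m : ℝ)⁻¹ • ∑ l, (gradient (f l) x - gradient (f l) τ)‖ ^ 2 ≤
      2 * L ^ 2 * ‖x - xstar‖ ^ 2 + 2 * L ^ 2 * ‖τ - xstar‖ ^ 2 := by
  set g : Fin m → EuclideanSpace ℝ (Fin p) :=
    fun j => gradient (f j) x - gradient (f j) τ with hg
  have hmne : (m : ℝ) ≠ 0 := by positivity
  have hmpos : (0 : ℝ) < m := by exact_mod_cast hm
  set B : ℝ := 2 * L ^ 2 * ‖x - xstar‖ ^ 2 + 2 * L ^ 2 * ‖τ - xstar‖ ^ 2 with hB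
  have step2 : ∀ j, ‖g j‖ ^ 2 ≤ B := by
    intro j
    have h1 := hsmooth j x xstar
    have h2 := hsmooth j τ xstar
    have htri : ‖g j‖ ≤ ‖gradient (f j) x - gradient (f j) xstar‖
        + ‖gradient (f j) τ - gradient (f j) xstar‖ := by
      have : g j = (gradient (f j) x - gradient (f j) xstar)
          - (gradient (f j) τ - gradient (f j) xstar) := by rw [hg]; abel
      rw [this]; exact norm_sub_le _ _
    have hu2 : ‖gradient (f j) x - gradient (f j) xstar‖ ^ 2 ≤ (L * ‖x - xstar‖) ^ 2 :=
      pow_le_pow_left₀ (norm_nonneg _) h1 2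
    have hv2 : ‖gradient (f j) τ - gradient (f j) xstar‖ ^ 2 ≤ (L * ‖τ - xstar‖) ^ 2 :=
      pow_le_pow_left₀ (norm_nonneg _) h2 2
    have hgj : ‖g j‖ ^ 2 ≤ (‖gradient (f j) x - gradient (f j) xstar‖
        + ‖gradient (f j) τ - gradient (f j) xstar‖) ^ 2 :=
      pow_le_pow_left₀ (norm_nonneg _) htri 2
    rw [hB]
    nlinarith [sq_nonneg (‖gradient (f j) x - gradient (f j) xstar‖
      - ‖gradient (f j) τ - gradient (f j) xstar‖)]
  have step1 := var_le_meansq hm g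
  have step3 : ∑ j, ‖g j‖ ^ 2 ≤ m * B := by
    calc ∑ j, ‖g j‖ ^ 2 ≤ ∑ _j : Fin m, B := Finset.sum_le_sum fun j _ => step2 j
    _ = m * B := by simp [mul_comm]
  have : (m : ℝ)⁻¹ * ∑ j, ‖g j - (m : ℝ)⁻¹ • ∑ l, g l‖ ^ 2 ≤ B := by
    rw [inv_mul_le_iff₀ hmpos]
    exact le_trans step1 step3
  exact this
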